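/- In the setting of canonical extension, the second fundamental form of H·M satisfies: II_{H·M}(X,Y) = II_M(X,Y) for X, Y ∈ T_pM; II_{H·M}(U,V) = (II_{H·p}(U,V))^⊥ for U, V ∈ T_p(H·p); and II_{H·M}(X,U) = 0 for X ∈ T_pM, U ∈ T_p(H·p), at each p ∈ M. -/

import Mathlib

noncomputable section

/-- If `v - w ∈ K`, the projections of `v` and `w` onto `Kᗮ` agree. -/
lemma proj_orth_congr {V : Type*} [NormedAddCommGroup V] [InnerProductSpace ℝ V]
    [FiniteDimensional ℝ V] (K : Submodule ℝ V) (v w : V) (h : v - w ∈ K) :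
    ((Submodule.orthogonalProjectionOnto Kᗮ v : Kᗮ) : V) = ((Submodule.orthogonalProjectionOnto Kᗮ w : Kᗮ) : V) := by
  have h0 : Submodule.orthogonalProjectionOnto Kᗮ (v - w) = 0 :=
    Submodule.orthogonalProjectionOnto_apply_of_mem_orthogonal
      (K.le_orthogonal_orthogonal h)
  have := map_sub (Submodule.orthogonalProjectionOnto Kᗮ) v w
  rw [h0] at this
  have : Submodule.orthogonalProjectionOnto Kᗮ v = Submodule.orthogonalProjectionOnto Kᗮ w := by
    rw [eq_comm, sub_eq_zero] at this; exact this
  rw [this]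

/-- the second fundamental form of the canonical extension `H·M`
satisfies, at every `p ∈ M`:
`II_{H·M}(X,Y) = II_M(X,Y)` for `X, Y` tangent to `M`;
`II_{H·M}(U,W) = (II_{H·p}(U,W))^⊥` for `U, W` tangent to the orbit `H·p`;
`II_{H·M}(X,U) = 0` in the mixed case.

Abstract model: points `P`, tangent spaces inside a fixed finite-dimensional inner
product space `V`, ambient covariant derivative `conn` of vector fields; `Σ` is
totally geodesic with tangent distribution `TS`, the orbits meet `Σ` orthogonally
and complementarily (`Torb p = (TS p)ᗮ`), `M ⊆ Σ` has tangent distribution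
`TM ≤ TS`, and the tangent space of `H·M` at `p ∈ M` is `TM p ⊔ Torb p`.  The
second fundamental form of a submanifold with tangent distribution `T` is
`(X,Y) ↦ ((conn X Y p))^⊥`, the projection onto `(T p)ᗮ`. -/

theorem second_fundamental_form_of_canonical_extension
    {P V : Type*} [NormedAddCommGroup V] [InnerProductSpace ℝ V] [FiniteDimensional ℝ V]
    (conn : (P → V) → (P → V) → (P → V))
    (Sset : Set P) (TS Torb : P → Submodule ℝ V)
    (h_polar : ∀ p ∈ Sset, Torb p = (TS p)ᗮ)
    -- `Σ` is totally geodesic: second fundamental form and shape operator vanish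
    (h_tot_geod : ∀ X Y : P → V, (∀ p ∈ Sset, X p ∈ TS p) → (∀ p ∈ Sset, Y p ∈ TS p) →
      ∀ p ∈ Sset, conn X Y p ∈ TS p)
    (h_shape : ∀ X U : P → V, (∀ p ∈ Sset, X p ∈ TS p) → (∀ p ∈ Sset, U p ∈ (TS p)ᗮ) →
      ∀ p ∈ Sset, conn X U p ∈ (TS p)ᗮ)
    (Mset : Set P) (hMS : Mset ⊆ Sset)
    (TM : P → Submodule ℝ V) (hTMS : ∀ p ∈ Mset, TM p ≤ TS p) :
    -- (1) `II_{H·M}(X,Y) = II_M(X,Y)` for `X, Y` tangent to `M`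
    (∀ X Y : P → V,
      (∀ p ∈ Mset, X p ∈ TM p) → (∀ p ∈ Mset, Y p ∈ TM p) →
      (∀ p ∈ Sset, X p ∈ TS p) → (∀ p ∈ Sset, Y p ∈ TS p) →
      ∀ p ∈ Mset,
        ((Submodule.orthogonalProjectionOnto (TM p ⊔ Torb p)ᗮ (conn X Y p) : (TM p ⊔ Torb p)ᗮ) : V) =
        ((Submodule.orthogonalProjectionOnto (TM p)ᗮ (conn X Y p) : (TM p)ᗮ) : V)) ∧
    -- (2) `II_{H·M}(U,W) = (II_{H·p}(U,W))^⊥` for `U, W` tangent to the orbits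
    (∀ U W : P → V,
      (∀ p ∈ Mset, U p ∈ Torb p) → (∀ p ∈ Mset, W p ∈ Torb p) →
      ∀ p ∈ Mset,
        ((Submodule.orthogonalProjectionOnto (TM p ⊔ Torb p)ᗮ (conn U W p) : (TM p ⊔ Torb p)ᗮ) : V) =
        ((Submodule.orthogonalProjectionOnto (TM p ⊔ Torb p)ᗮ
          ((Submodule.orthogonalProjectionOnto (Torb p)ᗮ (conn U W p) : (Torb p)ᗮ) : V) : (TM p ⊔ Torb p)ᗮ) : V)) ∧
    -- (3) `II_{H·M}(X,U) = 0` in the mixed case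
    (∀ X U : P → V,
      (∀ p ∈ Mset, X p ∈ TM p) → (∀ p ∈ Sset, X p ∈ TS p) →
      (∀ p ∈ Sset, U p ∈ (TS p)ᗮ) →
      ∀ p ∈ Mset,
        ((Submodule.orthogonalProjectionOnto (TM p ⊔ Torb p)ᗮ (conn X U p) : (TM p ⊔ Torb p)ᗮ) : V) = 0) := by
  refine ⟨?_, ?_, ?_⟩
  · intro X Y hXM hYM hXS hYS p hp
    have hpS := hMS hp
    set v := conn X Y p with hv
    have hvS : v ∈ TS p := h_tot_geod X Y hXS hYS p hpS
    set a : V := ((Submodule.orthogonalProjectionOnto (TM p) v : TM p) : V) with ha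
    have haM : a ∈ TM p := (Submodule.orthogonalProjectionOnto (TM p) v).2
    set b : V := v - a with hb
    have hbO : b ∈ (TM p)ᗮ := Submodule.sub_starProjection_mem_orthogonal v
    have hbS : b ∈ TS p := Submodule.sub_mem _ hvS (hTMS p hp haM)
    have hbTorb : b ∈ (Torb p)ᗮ := by
      rw [h_polar p hpS]
      exact (TS p).le_orthogonal_orthogonal hbS
    have hbSup : b ∈ (TM p ⊔ Torb p)ᗮ := by
      rw [← Submodule.inf_orthogonal]
      exact ⟨hbO, hbTorb⟩
    have h1 : ((Submodule.orthogonalProjectionOnto (TM p ⊔ Torb p)ᗮ v : (TM p ⊔ Torb p)ᗮ) : V) = b := by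
      rw [proj_orth_congr (TM p ⊔ Torb p) v b
        (by simpa [hb] using Submodule.mem_sup_left haM)]
      exact Submodule.starProjection_eq_self_iff.2 hbSup
    have h2 : ((Submodule.orthogonalProjectionOnto (TM p)ᗮ v : (TM p)ᗮ) : V) = b := by
      rw [proj_orth_congr (TM p) v b (by simpa [hb] using haM)]
      exact Submodule.starProjection_eq_self_iff.2 hbO
    rw [h1, h2]
  · intro U W hUM hWM p hp
    set v := conn U W p with hv
    set w : V := ((Submodule.orthogonalProjectionOnto (Torb p)ᗮ v : (Torb p)ᗮ) : V) with hw
    have hsub : v - w ∈ TM p ⊔ Torb p := by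
      have := Submodule.sub_starProjection_mem_orthogonal (K := (Torb p)ᗮ) v
      rw [Submodule.orthogonal_orthogonal] at this
      exact Submodule.mem_sup_right this
    exact proj_orth_congr (TM p ⊔ Torb p) v w hsub
  · intro X U hXM hXS hUO p hp
    have hpS := hMS hp
    have hvO : conn X U p ∈ (TS p)ᗮ := h_shape X U hXS hUO p hpS
    have hvSup : conn X U p ∈ TM p ⊔ Torb p :=
      Submodule.mem_sup_right (by rw [h_polar p hpS]; exact hvO)
    have := Submodule.orthogonalProjectionOnto_apply_of_mem_orthogonal
      ((TM p ⊔ Torb p).le_orthogonal_orthogonal hvSup)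
    rw [this]; rfl
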